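/- arXiv:1211.5562 — 4 statements merged into one kernel-verified Lean document; each statement's English description precedes it below -/
import Mathlib

section
/- Let X₁, X₂, … be i.i.d. with mean μ > 0 and Sₙ = X₁+…+Xₙ, and N(γ) = inf{n ≥ 1 : Sₙ ≥ γ}. Then E[N(γ)]/γ → 1/μ as γ → ∞. -/
set_option linter.unusedSectionVars false

open MeasureTheory ProbabilityTheory Filter Set
open scoped ENNReal NNReal Topology

namespace FPT

variable {Ω : Type*} [MeasurableSpace Ω] {μ : Measure Ω} [IsProbabilityMeasure μ]

/-- partial sums -/
noncomputable def S (X : ℕ → Ω → ℝ) (n : ℕ) (ω : Ω) : ℝ := ∑ i ∈ Finset.range n, X i ω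

/-- first passage time -/
noncomputable def Nf (X : ℕ → Ω → ℝ) (γ : ℝ) (ω : Ω) : ℕ :=
  sInf {n : ℕ | 1 ≤ n ∧ γ ≤ S X n ω}

/-- the event that the walk stays below γ up to time k -/
def B (X : ℕ → Ω → ℝ) (γ : ℝ) (k : ℕ) : Set Ω := {ω | ∀ j, 1 ≤ j → j ≤ k → S X j ω < γ}

variable {X : ℕ → Ω → ℝ} {γ : ℝ}

lemma measurable_S (hmeas : ∀ i, Measurable (X i)) (n : ℕ) : Measurable (S X n) :=
  Finset.measurable_sum _ fun i _ => hmeas i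

lemma measurableSet_B (hmeas : ∀ i, Measurable (X i)) (k : ℕ) :
    MeasurableSet (B X γ k) := by
  have : B X γ k = ⋂ j, ⋂ (_ : 1 ≤ j), ⋂ (_ : j ≤ k), {ω | S X j ω < γ} := by
    ext ω; simp [B]
  rw [this]
  exact MeasurableSet.iInter fun j => MeasurableSet.iInter fun _ =>
    MeasurableSet.iInter fun _ => measurableSet_lt (measurable_S hmeas j) measurable_const

lemma mem_B_of_lt_Nf {ω : Ω} {k : ℕ} (h : k < Nf X γ ω) : ω ∈ B X γ k := by
  intro j h1 hjk
  by_contra hc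
  push_neg at hc
  have : Nf X γ ω ≤ j := Nat.sInf_le ⟨h1, hc⟩
  omega
lemma lt_Nf_of_mem_B {ω : Ω} {k : ℕ}
    (hne : {n : ℕ | 1 ≤ n ∧ γ ≤ S X n ω}.Nonempty) (h : ω ∈ B X γ k) : k < Nf X γ ω := by
  have hmem := Nat.sInf_mem hne
  by_contra hc
  push_neg at hc
  exact absurd hmem.2 (not_le.mpr (h _ hmem.1 hc))

lemma B_iff {ω : Ω} {k : ℕ} (hne : {n : ℕ | 1 ≤ n ∧ γ ≤ S X n ω}.Nonempty) :
    ω ∈ B X γ k ↔ k < Nf X γ ω := ⟨lt_Nf_of_mem_B hne, mem_B_of_lt_Nf⟩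

/-- Independence of `f (X k)` from the indicator of `B X γ k`. -/
lemma indepFun_B (hmeas : ∀ i, Measurable (X i))
    (hindep : iIndepFun X μ) (k : ℕ)
    (f : ℝ → ℝ) (hf : Measurable f) :
    IndepFun (fun ω => f (X k ω)) ((B X γ k).indicator (fun _ => (1 : ℝ))) μ := by
  classical
  have hdisj : Disjoint ({k} : Finset ℕ) (Finset.range k) := by
    simp [Finset.disjoint_singleton_left]
  have h1 := hindep.indepFun_finset {k} (Finset.range k) hdisj hmeas
  set C : Set ((i : (Finset.range k : Finset ℕ)) → ℝ) :=
    {v | ∀ j, 1 ≤ j → j ≤ k →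
      (∑ i ∈ Finset.range j, if h : i ∈ Finset.range k then v ⟨i, h⟩ else 0) < γ} with hC
  have hCmeas : MeasurableSet C := by
    have : C = ⋂ j, ⋂ (_ : 1 ≤ j), ⋂ (_ : j ≤ k),
        {v : (i : (Finset.range k : Finset ℕ)) → ℝ |
          (∑ i ∈ Finset.range j, if h : i ∈ Finset.range k then v ⟨i, h⟩ else 0) < γ} := by
      ext v; simp [hC]
    rw [this]
    refine MeasurableSet.iInter fun j => MeasurableSet.iInter fun _ =>
      MeasurableSet.iInter fun _ => measurableSet_lt ?_ measurable_const
    refine Finset.measurable_sum _ fun i _ => ?_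
    by_cases h : i ∈ Finset.range k
    · simpa [h] using measurable_pi_apply (⟨i, h⟩ : (Finset.range k : Finset ℕ))
    · simp [h]
  have hB_eq : B X γ k = (fun ω (i : (Finset.range k : Finset ℕ)) => X i ω) ⁻¹' C := by
    ext ω
    simp only [B, mem_setOf_eq, mem_preimage, hC]
    refine forall_congr' fun j => forall_congr' fun h1 => forall_congr' fun hjk => ?_
    have hsum : (∑ i ∈ Finset.range j,
        if h : i ∈ Finset.range k then X i ω else 0) = S X j ω := by
      refine Finset.sum_congr rfl fun i hi => ?_
      have : i ∈ Finset.range k :=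
        Finset.mem_range.mpr (lt_of_lt_of_le (Finset.mem_range.mp hi) hjk)
      simp [this]
    rw [hsum]
  have hg1 : Measurable fun v : (i : ({k} : Finset ℕ)) → ℝ =>
      f (v ⟨k, Finset.mem_singleton_self k⟩) :=
    hf.comp (measurable_pi_apply _)
  have hg2 : Measurable fun v : (i : (Finset.range k : Finset ℕ)) → ℝ =>
      C.indicator (fun _ => (1 : ℝ)) v := measurable_const.indicator hCmeas
  have := h1.comp hg1 hg2
  convert this using 1
  · rfl
  funext ω
  rw [hB_eq]
  simp only [Function.comp]
  by_cases h : (fun i : (Finset.range k : Finset ℕ) => X i ω) ∈ C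
  · rw [Set.indicator_of_mem h, Set.indicator_of_mem (by exact h)]
  · rw [Set.indicator_of_notMem h, Set.indicator_of_notMem (by exact h)]

end FPT
section part2
namespace FPT
variable {Ω : Type*} [MeasurableSpace Ω] {μ : Measure Ω} [IsProbabilityMeasure μ]
variable {X : ℕ → Ω → ℝ} {γ : ℝ}

lemma integrable_comp (hmeas : ∀ i, Measurable (X i)) (hident : ∀ i, IdentDistrib (X i) (X 0) μ μ)
    {f : ℝ → ℝ} (hf : Measurable f) (hint : Integrable (fun ω => f (X 0 ω)) μ) (k : ℕ) :
    Integrable (fun ω => f (X k ω)) μ :=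
  ((hident k).comp hf).integrable_iff.mpr hint

lemma integral_comp_eq (hident : ∀ i, IdentDistrib (X i) (X 0) μ μ)
    {f : ℝ → ℝ} (hf : Measurable f) (k : ℕ) :
    ∫ ω, f (X k ω) ∂μ = ∫ ω, f (X 0 ω) ∂μ :=
  ((hident k).comp hf).integral_eq

/-- Key independence consequence: `E[f(Xₖ) 1_{Bₖ}] = E[f(X₀)] μ(Bₖ)`. -/
lemma integral_mul_indicator_B (hmeas : ∀ i, Measurable (X i))
    (hindep : iIndepFun X μ)
    (hident : ∀ i, IdentDistrib (X i) (X 0) μ μ)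
    {f : ℝ → ℝ} (hf : Measurable f) (hint : Integrable (fun ω => f (X 0 ω)) μ) (k : ℕ) :
    ∫ ω, f (X k ω) * (B X γ k).indicator (fun _ => (1 : ℝ)) ω ∂μ
      = (∫ ω, f (X 0 ω) ∂μ) * (μ (B X γ k)).toReal := by
  have hB := measurableSet_B (γ := γ) hmeas k
  have h := (indepFun_B (γ := γ) hmeas hindep k f hf).integral_mul_eq_mul_integral
      (integrable_comp hmeas hident hf hint k).aestronglyMeasurable
      ((integrable_const (1 : ℝ)).indicator hB).aestronglyMeasurable
  have h2 : ∫ ω, f (X k ω) * (B X γ k).indicator (fun _ => (1 : ℝ)) ω ∂μ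
      = (∫ ω, f (X k ω) ∂μ) * ∫ ω, (B X γ k).indicator (fun _ => (1 : ℝ)) ω ∂μ := h
  rw [h2, integral_comp_eq hident hf k, integral_indicator_const _ hB]
  simp [mul_comm, measureReal_def]

lemma integrable_term (hmeas : ∀ i, Measurable (X i))
    (hident : ∀ i, IdentDistrib (X i) (X 0) μ μ)
    {f : ℝ → ℝ} (hf : Measurable f) (hint : Integrable (fun ω => f (X 0 ω)) μ) (k : ℕ) :
    Integrable (fun ω => f (X k ω) * (B X γ k).indicator (fun _ => (1 : ℝ)) ω) μ := by
  have : (fun ω => f (X k ω) * (B X γ k).indicator (fun _ => (1 : ℝ)) ω)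
      = (B X γ k).indicator (fun ω => f (X k ω)) := by
    funext ω
    by_cases h : ω ∈ B X γ k <;> simp [h]
  rw [this]
  exact (integrable_comp hmeas hident hf hint k).indicator (measurableSet_B hmeas k)

lemma integrable_Wn (hmeas : ∀ i, Measurable (X i))
    (hident : ∀ i, IdentDistrib (X i) (X 0) μ μ)
    {f : ℝ → ℝ} (hf : Measurable f) (hint : Integrable (fun ω => f (X 0 ω)) μ) (n : ℕ) :
    Integrable (fun ω => ∑ k ∈ Finset.range n,
      f (X k ω) * (B X γ k).indicator (fun _ => (1 : ℝ)) ω) μ :=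
  integrable_finset_sum _ fun k _ => integrable_term hmeas hident hf hint k

/-- Truncated Wald identity. -/
lemma wald (hmeas : ∀ i, Measurable (X i))
    (hindep : iIndepFun X μ)
    (hident : ∀ i, IdentDistrib (X i) (X 0) μ μ)
    {f : ℝ → ℝ} (hf : Measurable f) (hint : Integrable (fun ω => f (X 0 ω)) μ) (n : ℕ) :
    ∫ ω, ∑ k ∈ Finset.range n, f (X k ω) * (B X γ k).indicator (fun _ => (1 : ℝ)) ω ∂μ
      = (∫ ω, f (X 0 ω) ∂μ) * ∑ k ∈ Finset.range n, (μ (B X γ k)).toReal := by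
  rw [integral_finset_sum _ fun k _ => integrable_term hmeas hident hf hint k,
    Finset.mul_sum]
  exact Finset.sum_congr rfl fun k _ =>
    integral_mul_indicator_B hmeas hindep hident hf hint k

end FPT
end part2
section part3
namespace FPT
variable {Ω : Type*} [MeasurableSpace Ω] {μ : Measure Ω} [IsProbabilityMeasure μ]
variable {X : ℕ → Ω → ℝ} {γ : ℝ}

lemma tendsto_S_atTop (hmeas : ∀ i, Measurable (X i))
    (hindep : iIndepFun X μ)
    (hident : ∀ i, IdentDistrib (X i) (X 0) μ μ)
    (hint : Integrable (X 0) μ) (hm : 0 < ∫ ω, X 0 ω ∂μ) :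
    ∀ᵐ ω ∂μ, Tendsto (fun n => S X n ω) atTop atTop := by
  have hpair : Pairwise (Function.onFun (IndepFun · · μ) X) := fun i j hij => hindep.indepFun hij
  filter_upwards [strong_law_ae_real X hint hpair hident] with ω hω
  have h1 : Tendsto (fun n : ℕ => (S X n ω / n) * n) atTop atTop :=
    Tendsto.pos_mul_atTop hm hω tendsto_natCast_atTop_atTop
  refine h1.congr' ?_
  filter_upwards [eventually_ge_atTop 1] with n hn
  have : (n : ℝ) ≠ 0 := by positivity
  field_simp

lemma good_ae (hmeas : ∀ i, Measurable (X i))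
    (hindep : iIndepFun X μ)
    (hident : ∀ i, IdentDistrib (X i) (X 0) μ μ)
    (hint : Integrable (X 0) μ) (hm : 0 < ∫ ω, X 0 ω ∂μ) (γ : ℝ) :
    ∀ᵐ ω ∂μ, {n : ℕ | 1 ≤ n ∧ γ ≤ S X n ω}.Nonempty := by
  filter_upwards [tendsto_S_atTop hmeas hindep hident hint hm] with ω hω
  obtain ⟨a, ha⟩ := (hω.eventually_ge_atTop γ).exists_forall_of_atTop
  exact ⟨max a 1, le_max_right _ _, ha _ (le_max_left _ _)⟩

/-- measurable `ℝ≥0∞`-valued version of `Nf` -/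
noncomputable def M (X : ℕ → Ω → ℝ) (γ : ℝ) (ω : Ω) : ℝ≥0∞ :=
  ∑' k, (B X γ k).indicator (fun _ => (1 : ℝ≥0∞)) ω

lemma measurable_M (hmeas : ∀ i, Measurable (X i)) : Measurable (M X γ) :=
  Measurable.ennreal_tsum fun k => measurable_const.indicator (measurableSet_B hmeas k)

lemma Nf_eq_M_ae (hmeas : ∀ i, Measurable (X i))
    (hindep : iIndepFun X μ)
    (hident : ∀ i, IdentDistrib (X i) (X 0) μ μ)
    (hint : Integrable (X 0) μ) (hm : 0 < ∫ ω, X 0 ω ∂μ) (γ : ℝ) :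
    ∀ᵐ ω ∂μ, (Nf X γ ω : ℝ≥0∞) = M X γ ω := by
  filter_upwards [good_ae hmeas hindep hident hint hm γ] with ω hω
  have : M X γ ω = ∑' k, if k < Nf X γ ω then (1 : ℝ≥0∞) else 0 := by
    refine tsum_congr fun k => ?_
    by_cases h : k < Nf X γ ω
    · rw [Set.indicator_of_mem (mem_B_of_lt_Nf h), if_pos h]
    · rw [Set.indicator_of_notMem (fun hc => h (lt_Nf_of_mem_B hω hc)), if_neg h]
  rw [this, tsum_eq_sum (s := Finset.range (Nf X γ ω))
    (fun k hk => if_neg (by simpa using hk))]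
  rw [Finset.sum_ite_of_true (fun k hk => Finset.mem_range.mp hk)]
  simp


lemma aemeasurable_Nf (hmeas : ∀ i, Measurable (X i))
    (hindep : iIndepFun X μ)
    (hident : ∀ i, IdentDistrib (X i) (X 0) μ μ)
    (hint : Integrable (X 0) μ) (hm : 0 < ∫ ω, X 0 ω ∂μ) (γ : ℝ) :
    AEMeasurable (fun ω => (Nf X γ ω : ℝ≥0∞)) μ :=
  ⟨M X γ, measurable_M hmeas, Nf_eq_M_ae hmeas hindep hident hint hm γ⟩

lemma lintegral_Nf (hmeas : ∀ i, Measurable (X i))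
    (hindep : iIndepFun X μ)
    (hident : ∀ i, IdentDistrib (X i) (X 0) μ μ)
    (hint : Integrable (X 0) μ) (hm : 0 < ∫ ω, X 0 ω ∂μ) (γ : ℝ) :
    ∫⁻ ω, (Nf X γ ω : ℝ≥0∞) ∂μ = ∑' k, μ (B X γ k) := by
  rw [lintegral_congr_ae (Nf_eq_M_ae hmeas hindep hident hint hm γ)]
  unfold M
  rw [lintegral_tsum fun k =>
    (measurable_const.indicator (measurableSet_B hmeas k)).aemeasurable]
  exact tsum_congr fun k => lintegral_indicator_one (measurableSet_B hmeas k)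

end FPT
end part3
section part4
namespace FPT
variable {Ω : Type*} [MeasurableSpace Ω] {μ : Measure Ω} [IsProbabilityMeasure μ]
variable {X : ℕ → Ω → ℝ} {γ : ℝ}

lemma B_anti {j k : ℕ} (hjk : j ≤ k) : B X γ k ⊆ B X γ j :=
  fun ω h i h1 hij => h i h1 (le_trans hij hjk)

lemma S_le_of_below {ω : Ω} {t : ℕ} {c : ℝ} (hγ : 0 ≤ γ) (hc : 0 ≤ c)
    (hXc : ∀ i ω, X i ω ≤ c)
    (h : ∀ j, 1 ≤ j → j < t → S X j ω < γ) : S X t ω ≤ γ + c := by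
  rcases t with _ | s
  · simp only [S, Finset.range_zero, Finset.sum_empty]
    linarith
  · have hS : S X (s + 1) ω = S X s ω + X s ω := by
      simp [S, Finset.sum_range_succ]
    have hSs : S X s ω ≤ γ := by
      rcases Nat.eq_zero_or_pos s with hs | hs
      · simp [hs, S]; exact hγ
      · exact le_of_lt (h s hs (Nat.lt_succ_self s))
    have := hXc s ω
    rw [hS]; linarith

lemma Wn_le_of_bounded {ω : Ω} {c : ℝ} (hγ : 0 ≤ γ) (hc : 0 ≤ c)
    (hXc : ∀ i ω, X i ω ≤ c) (n : ℕ) :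
    ∑ k ∈ Finset.range n, X k ω * (B X γ k).indicator (fun _ => (1 : ℝ)) ω ≤ γ + c := by
  by_cases hall : ∀ k ∈ Finset.range n, ω ∈ B X γ k
  · have heq : ∑ k ∈ Finset.range n, X k ω * (B X γ k).indicator (fun _ => (1 : ℝ)) ω
        = S X n ω := by
      refine Finset.sum_congr rfl fun k hk => ?_
      rw [Set.indicator_of_mem (hall k hk), mul_one]
    rw [heq]
    refine S_le_of_below hγ hc hXc fun j h1 hjn => ?_
    have hj : j - 1 < n := by omega
    have := hall (n - 1) (Finset.mem_range.mpr (by omega))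
    exact this j h1 (by omega)
  · push_neg at hall
    set K := sInf {k | ω ∉ B X γ k} with hK
    obtain ⟨k₀, hk₀n, hk₀⟩ := hall
    have hk₀n' : k₀ < n := Finset.mem_range.mp hk₀n
    have hne : {k | ω ∉ B X γ k}.Nonempty := ⟨k₀, hk₀⟩
    have hKmem : ω ∉ B X γ K := Nat.sInf_mem hne
    have hKle : K ≤ k₀ := Nat.sInf_le hk₀
    have hlt : ∀ k, k < K → ω ∈ B X γ k := by
      intro k hk
      by_contra hc'
      have := Nat.sInf_le (show k ∈ {k | ω ∉ B X γ k} from hc')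
      omega
    have hge : ∀ k, K ≤ k → ω ∉ B X γ k := fun k hk h => hKmem (B_anti hk h)
    have heq : ∑ k ∈ Finset.range n, X k ω * (B X γ k).indicator (fun _ => (1 : ℝ)) ω
        = S X K ω := by
      rw [← Finset.sum_subset (Finset.range_subset_range.mpr (by omega : K ≤ n))
        (fun k _ hk => by
          rw [Set.indicator_of_notMem (hge k (by simpa using hk)), mul_zero])]
      refine Finset.sum_congr rfl fun k hk => ?_
      rw [Set.indicator_of_mem (hlt k (Finset.mem_range.mp hk)), mul_one]
    rw [heq]
    refine S_le_of_below hγ hc hXc fun j h1 hjK => ?_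
    exact hlt j hjK j h1 le_rfl

lemma lintegral_Nf_le (hmeas : ∀ i, Measurable (X i))
    (hindep : iIndepFun X μ)
    (hident : ∀ i, IdentDistrib (X i) (X 0) μ μ)
    (hint : Integrable (X 0) μ) (hm : 0 < ∫ ω, X 0 ω ∂μ)
    (hγ : 0 ≤ γ) {c : ℝ} (hc : 0 ≤ c) (hXc : ∀ i ω, X i ω ≤ c) :
    ∫⁻ ω, (Nf X γ ω : ℝ≥0∞) ∂μ ≤ ENNReal.ofReal ((γ + c) / ∫ ω, X 0 ω ∂μ) := by
  set m := ∫ ω, X 0 ω ∂μ with hmdef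
  rw [lintegral_Nf hmeas hindep hident hint hm γ]
  have hpartial : ∀ n : ℕ, ∑ k ∈ Finset.range n, μ (B X γ k)
      ≤ ENNReal.ofReal ((γ + c) / m) := by
    intro n
    have hfin : ∑ k ∈ Finset.range n, μ (B X γ k) ≠ ⊤ :=
      (ENNReal.sum_lt_top.mpr fun k _ => measure_lt_top μ _).ne
    rw [ENNReal.le_ofReal_iff_toReal_le hfin (by positivity)]
    rw [ENNReal.toReal_sum fun k _ => (measure_lt_top μ _).ne]
    rw [le_div_iff₀ hm]
    have hwald := wald (γ := γ) hmeas hindep hident measurable_id hint n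
    simp only [id] at hwald
    rw [mul_comm, ← hwald]
    calc ∫ ω, ∑ k ∈ Finset.range n, X k ω * (B X γ k).indicator (fun _ => (1:ℝ)) ω ∂μ
        ≤ ∫ _, γ + c ∂μ := by
          refine integral_mono (integrable_Wn hmeas hident measurable_id hint n)
            (integrable_const _) fun ω => ?_
          exact Wn_le_of_bounded hγ hc hXc n
      _ = γ + c := by simp
  calc ∑' k, μ (B X γ k) = ⨆ s : Finset ℕ, ∑ k ∈ s, μ (B X γ k) :=
        ENNReal.tsum_eq_iSup_sum
    _ ≤ ENNReal.ofReal ((γ + c) / m) := by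
        refine iSup_le fun s => ?_
        obtain ⟨n, hn⟩ := s.exists_nat_subset_range
        exact le_trans (Finset.sum_le_sum_of_subset hn) (hpartial n)

end FPT
end part4
section part5
namespace FPT
variable {Ω : Type*} [MeasurableSpace Ω] {μ : Measure Ω} [IsProbabilityMeasure μ]
variable {X : ℕ → Ω → ℝ} {γ : ℝ}

lemma lower_bound (hmeas : ∀ i, Measurable (X i))
    (hindep : iIndepFun X μ)
    (hident : ∀ i, IdentDistrib (X i) (X 0) μ μ)
    (hint : Integrable (X 0) μ) (hm : 0 < ∫ ω, X 0 ω ∂μ)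
    (hfin : ∑' k, μ (B X γ k) ≠ ⊤) :
    γ ≤ (∫ ω, X 0 ω ∂μ) * (∑' k, μ (B X γ k)).toReal := by
  set m := ∫ ω, X 0 ω ∂μ with hmdef
  set T := ∑' k, μ (B X γ k) with hTdef
  set Wn : ℕ → Ω → ℝ := fun n ω =>
    ∑ k ∈ Finset.range n, X k ω * (B X γ k).indicator (fun _ => (1 : ℝ)) ω with hWn
  set W : Ω → ℝ := fun ω => S X (Nf X γ ω) ω with hW
  -- limit of integrals of Wn via Wald
  have h1 : Tendsto (fun n => ∫ ω, Wn n ω ∂μ) atTop (𝓝 (m * T.toReal)) := by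
    have hp : Tendsto (fun n => ∑ k ∈ Finset.range n, (μ (B X γ k)).toReal)
        atTop (𝓝 T.toReal) := by
      have h0 := ENNReal.tendsto_nat_tsum (fun k => μ (B X γ k))
      have h2 := (ENNReal.tendsto_toReal hfin).comp h0
      refine h2.congr fun n => ?_
      exact (ENNReal.toReal_sum fun k _ => (measure_lt_top μ _).ne)
    have := hp.const_mul m
    refine this.congr fun n => ?_
    exact (wald hmeas hindep hident measurable_id hint n).symm
  -- dominating function
  set H : Ω → ℝ≥0∞ := fun ω =>
    ∑' k, (‖X k ω‖₊ : ℝ≥0∞) * (B X γ k).indicator (fun _ => (1 : ℝ≥0∞)) ω with hH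
  have hHmeas : Measurable H :=
    Measurable.ennreal_tsum fun k =>
      ((hmeas k).nnnorm.coe_nnreal_ennreal).mul
        (measurable_const.indicator (measurableSet_B hmeas k))
  have habs : Integrable (fun ω => |X 0 ω|) μ := hint.abs
  have hterm_eq : ∀ k ω, (‖X k ω‖₊ : ℝ≥0∞) * (B X γ k).indicator (fun _ => (1 : ℝ≥0∞)) ω
      = ENNReal.ofReal (|X k ω| * (B X γ k).indicator (fun _ => (1 : ℝ)) ω) := by
    intro k ω
    by_cases h : ω ∈ B X γ k
    · simp only [Set.indicator_of_mem h, mul_one]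
      rw [← Real.norm_eq_abs, ofReal_norm, enorm_eq_nnnorm]
    · simp [Set.indicator_of_notMem h]
  have hHlint : ∫⁻ ω, H ω ∂μ = ENNReal.ofReal (∫ ω, |X 0 ω| ∂μ) * T := by
    rw [hH]
    rw [lintegral_tsum (f := fun k ω => (‖X k ω‖₊ : ℝ≥0∞) * (B X γ k).indicator (fun _ => (1 : ℝ≥0∞)) ω) fun k => (((hmeas k).nnnorm.coe_nnreal_ennreal).mul
      (measurable_const.indicator (measurableSet_B hmeas k))).aemeasurable]
    have hlint_term : ∀ k, ∫⁻ ω, (‖X k ω‖₊ : ℝ≥0∞)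
        * (B X γ k).indicator (fun _ => (1 : ℝ≥0∞)) ω ∂μ
        = ENNReal.ofReal (∫ ω, |X 0 ω| ∂μ) * μ (B X γ k) := by
      intro k
      have hi : Integrable (fun ω => |X k ω| * (B X γ k).indicator (fun _ => (1 : ℝ)) ω) μ :=
        integrable_term hmeas hident measurable_abs habs k
      have hnn : 0 ≤ᵐ[μ] fun ω => |X k ω| * (B X γ k).indicator (fun _ => (1 : ℝ)) ω := by
        refine Eventually.of_forall fun ω => ?_
        exact mul_nonneg (abs_nonneg _) (Set.indicator_nonneg (fun _ _ => zero_le_one) ω)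
      calc ∫⁻ ω, (‖X k ω‖₊ : ℝ≥0∞) * (B X γ k).indicator (fun _ => (1 : ℝ≥0∞)) ω ∂μ
          = ∫⁻ ω, ENNReal.ofReal (|X k ω| * (B X γ k).indicator (fun _ => (1 : ℝ)) ω) ∂μ := by
            exact lintegral_congr fun ω => hterm_eq k ω
        _ = ENNReal.ofReal (∫ ω, |X k ω| * (B X γ k).indicator (fun _ => (1 : ℝ)) ω ∂μ) :=
            (ofReal_integral_eq_lintegral_ofReal hi hnn).symm
        _ = ENNReal.ofReal ((∫ ω, |X 0 ω| ∂μ) * (μ (B X γ k)).toReal) := by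
            rw [integral_mul_indicator_B hmeas hindep hident measurable_abs habs k]
        _ = ENNReal.ofReal (∫ ω, |X 0 ω| ∂μ) * μ (B X γ k) := by
            rw [ENNReal.ofReal_mul (by positivity), ENNReal.ofReal_toReal (measure_lt_top μ _).ne]
    rw [tsum_congr hlint_term, ENNReal.tsum_mul_left]
  have hHne : ∫⁻ ω, H ω ∂μ ≠ ⊤ := by
    rw [hHlint]
    exact ENNReal.mul_ne_top ENNReal.ofReal_ne_top hfin
  have hHae : ∀ᵐ ω ∂μ, H ω < ⊤ := ae_lt_top hHmeas hHne
  set G : Ω → ℝ := fun ω => (H ω).toReal with hG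
  have hGint : Integrable G μ := integrable_toReal_of_lintegral_ne_top hHmeas.aemeasurable hHne
  -- pointwise bound
  have hterm_ne_top : ∀ k ω, (‖X k ω‖₊ : ℝ≥0∞)
      * (B X γ k).indicator (fun _ => (1 : ℝ≥0∞)) ω ≠ ⊤ := by
    intro k ω
    rw [hterm_eq]
    exact ENNReal.ofReal_ne_top
  have hbound : ∀ᵐ ω ∂μ, ∀ n, ‖Wn n ω‖ ≤ G ω := by
    filter_upwards [hHae] with ω hω n
    calc ‖Wn n ω‖ ≤ ∑ k ∈ Finset.range n,
          ‖X k ω * (B X γ k).indicator (fun _ => (1 : ℝ)) ω‖ := norm_sum_le _ _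
      _ = (∑ k ∈ Finset.range n,
            (‖X k ω‖₊ : ℝ≥0∞) * (B X γ k).indicator (fun _ => (1 : ℝ≥0∞)) ω).toReal := by
          rw [ENNReal.toReal_sum fun k _ => hterm_ne_top k ω]
          refine Finset.sum_congr rfl fun k _ => ?_
          rw [hterm_eq, ENNReal.toReal_ofReal
            (mul_nonneg (abs_nonneg _) (Set.indicator_nonneg (fun _ _ => zero_le_one) ω))]
          rw [Real.norm_eq_abs, abs_mul]
          congr 1
          by_cases h : ω ∈ B X γ k <;> simp [h]
      _ ≤ G ω := by
          refine ENNReal.toReal_mono hω.ne ?_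
          exact ENNReal.sum_le_tsum _
  -- a.e. convergence
  have hlim : ∀ᵐ ω ∂μ, Tendsto (fun n => Wn n ω) atTop (𝓝 (W ω)) := by
    filter_upwards [good_ae hmeas hindep hident hint hm γ] with ω hω
    have hev : ∀ n, Nf X γ ω ≤ n → Wn n ω = W ω := by
      intro n hn
      rw [hWn, hW]
      simp only
      rw [← Finset.sum_subset (Finset.range_subset_range.mpr hn)
        (fun k _ hk => by
          rw [Set.indicator_of_notMem, mul_zero]
          intro hc
          exact absurd (lt_Nf_of_mem_B hω hc) (by simpa using hk))]
      refine Finset.sum_congr rfl fun k hk => ?_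
      rw [Set.indicator_of_mem (mem_B_of_lt_Nf (Finset.mem_range.mp hk)), mul_one]
    refine tendsto_const_nhds.congr' ?_
    filter_upwards [eventually_ge_atTop (Nf X γ ω)] with n hn
    exact (hev n hn).symm
  -- dominated convergence
  have h2 : Tendsto (fun n => ∫ ω, Wn n ω ∂μ) atTop (𝓝 (∫ ω, W ω ∂μ)) := by
    refine tendsto_integral_of_dominated_convergence G
      (fun n => (integrable_Wn hmeas hident measurable_id hint n).aestronglyMeasurable)
      hGint ?_ hlim
    intro n
    filter_upwards [hbound] with ω hω using hω n
  have hWeq : ∫ ω, W ω ∂μ = m * T.toReal := tendsto_nhds_unique h2 h1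
  -- W ≥ γ a.e., W integrable
  have hWmeas : AEStronglyMeasurable W μ :=
    aestronglyMeasurable_of_tendsto_ae atTop
      (fun n => (integrable_Wn hmeas hident measurable_id hint n).aestronglyMeasurable) hlim
  have hWle : ∀ᵐ ω ∂μ, ‖W ω‖ ≤ G ω := by
    filter_upwards [hbound, hlim] with ω hb hl
    exact le_of_tendsto hl.norm (Eventually.of_forall fun n => hb n)
  have hWint : Integrable W μ := Integrable.mono' hGint hWmeas hWle
  have hWge : ∀ᵐ ω ∂μ, γ ≤ W ω := by
    filter_upwards [good_ae hmeas hindep hident hint hm γ] with ω hω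
    exact (Nat.sInf_mem hω).2
  have : γ ≤ ∫ ω, W ω ∂μ := by
    calc γ = ∫ _, γ ∂μ := by simp
      _ ≤ ∫ ω, W ω ∂μ := integral_mono_ae (integrable_const γ) hWint hWge
  rwa [hWeq] at this

end FPT
end part5
section part6
namespace FPT
variable {Ω : Type*} [MeasurableSpace Ω] {μ : Measure Ω} [IsProbabilityMeasure μ]

theorem main (X : ℕ → Ω → ℝ) (hmeas : ∀ i, Measurable (X i))
    (hindep : iIndepFun X μ)
    (hident : ∀ i, IdentDistrib (X i) (X 0) μ μ)
    (hint : Integrable (X 0) μ) (m : ℝ) (hm : 0 < m) (hmean : ∫ ω, X 0 ω ∂μ = m) :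
    Tendsto (fun γ : ℝ => (∫ ω, (Nf X γ ω : ℝ) ∂μ) / γ) atTop (nhds (1 / m)) := by
  have hm' : 0 < ∫ ω, X 0 ω ∂μ := hmean ▸ hm
  -- truncated variables
  set Y : ℕ → ℕ → Ω → ℝ := fun c i ω => min (X i ω) c with hY
  have hmeasY : ∀ c i, Measurable (Y c i) := fun c i => (hmeas i).min measurable_const
  have hindepY : ∀ c : ℕ, iIndepFun (Y c) μ := fun c =>
    hindep.comp (fun _ x => min x (c : ℝ)) fun _ => measurable_id.min measurable_const
  have hidentY : ∀ (c : ℕ) i, IdentDistrib (Y c i) (Y c 0) μ μ := fun c i =>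
    (hident i).comp (measurable_id.min measurable_const)
  have habs_bound : ∀ (c : ℕ) ω, ‖min (X 0 ω) (c : ℝ)‖ ≤ |X 0 ω| := by
    intro c ω
    rw [Real.norm_eq_abs]
    rcases le_total (X 0 ω) (c : ℝ) with h | h
    · rw [min_eq_left h]
    · rw [min_eq_right h, abs_of_nonneg (by positivity)]
      exact le_trans h (le_abs_self _)
  have hintY : ∀ c : ℕ, Integrable (Y c 0) μ := fun c =>
    Integrable.mono' hint.abs ((hmeasY c 0).aestronglyMeasurable)
      (Eventually.of_forall fun ω => habs_bound c ω)
  set mcf : ℕ → ℝ := fun c => ∫ ω, Y c 0 ω ∂μ with hmcf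
  have hmc_tend : Tendsto mcf atTop (𝓝 m) := by
    rw [← hmean]
    refine tendsto_integral_of_dominated_convergence (fun ω => |X 0 ω|)
      (fun c => (hmeasY c 0).aestronglyMeasurable) hint.abs
      (fun c => Eventually.of_forall fun ω => habs_bound c ω) ?_
    refine Eventually.of_forall fun ω => ?_
    refine tendsto_const_nhds.congr' ?_
    filter_upwards [tendsto_natCast_atTop_atTop.eventually_ge_atTop (X 0 ω)] with c hc
    exact (min_eq_left hc).symm
  -- main estimate
  rw [Metric.tendsto_atTop]
  intro ε hε
  -- choose truncation level
  have hev : ∀ᶠ c in atTop, 0 < mcf c ∧ 1 / mcf c < 1 / m + ε / 2 := by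
    have e1 := hmc_tend.eventually (eventually_gt_nhds hm)
    have h1d : Tendsto (fun c => 1 / mcf c) atTop (𝓝 (1 / m)) :=
      tendsto_const_nhds.div hmc_tend hm.ne'
    have e2 := h1d.eventually (eventually_lt_nhds (by linarith : 1 / m < 1 / m + ε / 2))
    exact e1.and e2
  obtain ⟨c, hc0, hc1⟩ := hev.exists
  refine ⟨max 1 (4 * c / (mcf c * ε)), fun γ hγA => ?_⟩
  have hγ1 : (1 : ℝ) ≤ γ := le_trans (le_max_left _ _) hγA
  have hγ0 : (0 : ℝ) < γ := lt_of_lt_of_le one_pos hγ1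
  have hγc : 4 * c / (mcf c * ε) ≤ γ := le_trans (le_max_right _ _) hγA
  -- the upper bound via truncation
  have hchain : ∫⁻ ω, (Nf X γ ω : ℝ≥0∞) ∂μ ≤ ENNReal.ofReal ((γ + c) / mcf c) := by
    have hmono : (fun ω => (Nf X γ ω : ℝ≥0∞)) ≤ᵐ[μ] fun ω => (Nf (Y c) γ ω : ℝ≥0∞) := by
      filter_upwards [good_ae (hmeasY c) (hindepY c) (hidentY c) (hintY c) hc0 γ] with ω hω
      refine Nat.cast_le.mpr (Nat.sInf_le ?_)
      have hmem := Nat.sInf_mem hω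
      refine ⟨hmem.1, le_trans hmem.2 ?_⟩
      exact Finset.sum_le_sum fun i _ => min_le_left _ _
    refine le_trans (lintegral_mono_ae hmono) ?_
    exact lintegral_Nf_le (hmeasY c) (hindepY c) (hidentY c) (hintY c) hc0
      (by linarith) (Nat.cast_nonneg c) (fun i ω => min_le_right _ _)
  have hfinX : ∑' k, μ (B X γ k) ≠ ⊤ := by
    rw [← lintegral_Nf hmeas hindep hident hint hm' γ]
    exact (lt_of_le_of_lt hchain ENNReal.ofReal_lt_top).ne
  -- the two bounds on I γ
  set I : ℝ := (∫⁻ ω, (Nf X γ ω : ℝ≥0∞) ∂μ).toReal with hI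
  have hIint : ∫ ω, (Nf X γ ω : ℝ) ∂μ = I := by
    rw [hI]
    rw [← integral_toReal (aemeasurable_Nf hmeas hindep hident hint hm' γ)
      (Eventually.of_forall fun ω => ENNReal.natCast_lt_top _)]
    exact integral_congr_ae (Eventually.of_forall fun ω => by simp)
  have hlow : γ ≤ m * I := by
    have := lower_bound hmeas hindep hident hint hm' hfinX
    rwa [hmean, ← lintegral_Nf hmeas hindep hident hint hm' γ] at this
  have hub : I ≤ (γ + c) / mcf c :=
    ENNReal.toReal_le_of_le_ofReal (by positivity) hchain
  -- conclude
  rw [hIint, Real.dist_eq, abs_sub_lt_iff]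
  have h1 : 1 / m ≤ I / γ := by
    rw [div_le_div_iff₀ hm hγ0]
    nlinarith
  have h2 : I / γ ≤ 1 / mcf c + c / (mcf c * γ) := by
    have h0 : mcf c ≠ 0 := hc0.ne'
    calc I / γ ≤ ((γ + c) / mcf c) / γ := by gcongr
      _ = 1 / mcf c + c / (mcf c * γ) := by field_simp
  have h3 : c / (mcf c * γ) ≤ ε / 4 := by
    rw [div_le_iff₀ (by positivity)]
    rw [div_le_iff₀ (by positivity)] at hγc
    nlinarith
  constructor <;> nlinarith

end FPT
end part6
/-- L¹ law for first passage times: for an i.i.d. random walk with mean `m > 0`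
and `N(γ) = inf{n ≥ 1 : Sₙ ≥ γ}`, one has `E[N(γ)]/γ → 1/m` as `γ → ∞`. -/
theorem first_passage_time_expectation_lln
    {Ω : Type*} [MeasurableSpace Ω] (μ : Measure Ω) [IsProbabilityMeasure μ]
    (X : ℕ → Ω → ℝ) (hmeas : ∀ i, Measurable (X i))
    (hindep : iIndepFun X μ)
    (hident : ∀ i, IdentDistrib (X i) (X 0) μ μ)
    (hint : Integrable (X 0) μ) (m : ℝ) (hm : 0 < m) (hmean : ∫ ω, X 0 ω ∂μ = m)
    (N : ℝ → Ω → ℕ)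
    (hN : ∀ γ ω, N γ ω = sInf {n : ℕ | 1 ≤ n ∧ γ ≤ ∑ i ∈ Finset.range n, X i ω}) :
    Tendsto (fun γ : ℝ => (∫ ω, (N γ ω : ℝ) ∂μ) / γ) atTop (nhds (1 / m)) := by
  have hNf : ∀ γ ω, N γ ω = FPT.Nf X γ ω := fun γ ω => hN γ ω
  have := FPT.main X hmeas hindep hident hint m hm hmean
  refine this.congr fun γ => ?_
  congr 1
  exact integral_congr_ae (Filter.Eventually.of_forall fun ω => by exact_mod_cast congrArg Nat.cast (hNf γ ω).symm)
end

section
/- Let W be a random walk with i.i.d. increments of negative mean δ < 0, W₀ = 0, and for γ > 0 define the last exit time τ(γ) = sup{n ≥ 1 : Wₙ ≥ −γ} (with sup ∅ = 0). Then τ(γ) < ∞ almost surely and τ(γ)/γ → −1/δ almost surely as γ → ∞. -/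
open MeasureTheory ProbabilityTheory Filter Set Topology

lemma det_key_lt (w : ℕ → ℝ) (c : ℝ) {δ : ℝ}
    (h : Tendsto (fun n : ℕ => w n / n) atTop (𝓝 δ)) (hc : δ < c) :
    ∀ᶠ n : ℕ in atTop, w n < c * n := by
  filter_upwards [h.eventually (gt_mem_nhds hc), eventually_ge_atTop 1] with n h1 h2
  have hn : (0 : ℝ) < n := by exact_mod_cast h2
  rw [div_lt_iff₀ hn] at h1
  exact h1

lemma det_key_gt (w : ℕ → ℝ) (c : ℝ) {δ : ℝ}
    (h : Tendsto (fun n : ℕ => w n / n) atTop (𝓝 δ)) (hc : c < δ) :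
    ∀ᶠ n : ℕ in atTop, c * n < w n := by
  filter_upwards [h.eventually (lt_mem_nhds hc), eventually_ge_atTop 1] with n h1 h2
  have hn : (0 : ℝ) < n := by exact_mod_cast h2
  rw [lt_div_iff₀ hn] at h1
  exact h1

lemma det_finite (w : ℕ → ℝ) {δ : ℝ} (hδ : δ < 0)
    (h : Tendsto (fun n : ℕ => w n / n) atTop (𝓝 δ)) (γ : ℝ) :
    {n : ℕ | 1 ≤ n ∧ -γ ≤ w n}.Finite := by
  obtain ⟨N, hN⟩ := (det_key_lt w (δ / 2) h (by linarith)).exists_forall_of_atTop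
  refine Set.Finite.subset (Set.finite_Iio (max N (⌈γ / (-(δ / 2))⌉₊ + 1))) ?_
  intro n hn
  simp only [Set.mem_Iio]
  by_contra hcon
  push_neg at hcon
  have hnN : N ≤ n := le_trans (le_max_left _ _) hcon
  have h1 : w n < δ / 2 * n := hN n hnN
  have h2 : -γ ≤ w n := hn.2
  have h3 : (⌈γ / (-(δ / 2))⌉₊ + 1 : ℕ) ≤ n := le_trans (le_max_right _ _) hcon
  have h4 : (⌈γ / (-(δ / 2))⌉₊ : ℝ) + 1 ≤ (n : ℝ) := by exact_mod_cast h3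
  have h5 : γ / (-(δ / 2)) ≤ (⌈γ / (-(δ / 2))⌉₊ : ℝ) := Nat.le_ceil _
  have h6 : -γ < δ / 2 * n := lt_of_le_of_lt h2 h1
  have hpos : (0 : ℝ) < -(δ / 2) := by linarith
  rw [div_le_iff₀ hpos] at h5
  nlinarith

lemma det_tendsto (w : ℕ → ℝ) {δ : ℝ} (hδ : δ < 0)
    (h : Tendsto (fun n : ℕ => w n / n) atTop (𝓝 δ)) :
    Tendsto (fun γ : ℝ => ((sSup {n : ℕ | 1 ≤ n ∧ -γ ≤ w n} : ℕ) : ℝ) / γ) atTop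
      (𝓝 (-1 / δ)) := by
  have hL : (0 : ℝ) < -1 / δ := div_pos_iff.mpr (Or.inr ⟨by norm_num, hδ⟩)
  rw [tendsto_order]
  constructor
  · -- lower bound
    intro a ha
    set c' : ℝ := (max a 0 + -1 / δ) / 2 with hc'def
    have hmax0 : (0 : ℝ) ≤ max a 0 := le_max_right _ _
    have hmaxa : a ≤ max a 0 := le_max_left _ _
    have hmaxL : max a 0 < -1 / δ := max_lt ha hL
    have hc'0 : 0 < c' := by simp only [hc'def]; linarith
    have hc'a : a < c' := by simp only [hc'def]; linarith
    have hc'L : c' < -1 / δ := by simp only [hc'def]; linarith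
    have hkey : c' * (-δ) < 1 := by
      have := mul_lt_mul_of_pos_right hc'L (show (0:ℝ) < -δ by linarith)
      have h1 : -1 / δ * -δ = 1 := by
        field_simp
        exact div_self hδ.ne
      linarith [h1 ▸ this]
    have hc₂ : -(1 / c') < δ := by
      rw [neg_lt, lt_div_iff₀ hc'0]
      nlinarith
    obtain ⟨N, hN⟩ := (det_key_gt w (-(1 / c')) h hc₂).exists_forall_of_atTop
    filter_upwards [eventually_gt_atTop (0 : ℝ),
      eventually_ge_atTop (((N : ℝ) + 1) / c'),
      eventually_gt_atTop (1 / (c' - a))] with γ hγ0 hγ1 hγ2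
    have hγc' : (N : ℝ) + 1 ≤ γ * c' := by
      rw [div_le_iff₀ hc'0] at hγ1; linarith
    have hγc'0 : 0 ≤ γ * c' := by positivity
    set n : ℕ := ⌊γ * c'⌋₊ with hndef
    have hn_le : (n : ℝ) ≤ γ * c' := Nat.floor_le hγc'0
    have hn_gt : γ * c' - 1 < (n : ℝ) := by
      have := Nat.lt_floor_add_one (γ * c')
      linarith
    have hnN : N + 1 ≤ n := by
      rw [hndef]
      apply Nat.le_floor
      push_cast
      linarith
    have hn1 : 1 ≤ n := le_trans (Nat.le_add_left 1 N) hnN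
    have hmem : n ∈ {m : ℕ | 1 ≤ m ∧ -γ ≤ w m} := by
      refine ⟨hn1, ?_⟩
      have hw : -(1 / c') * n < w n := hN n (by omega)
      have hinv : (1 / c') * (γ * c') = γ := by field_simp
      nlinarith [mul_le_mul_of_nonneg_left hn_le (le_of_lt (show (0:ℝ) < 1 / c' by positivity))]
    have hfin := det_finite w hδ h γ
    have hle : n ≤ sSup {m : ℕ | 1 ≤ m ∧ -γ ≤ w m} := le_csSup hfin.bddAbove hmem
    have hle' : (n : ℝ) ≤ ((sSup {m : ℕ | 1 ≤ m ∧ -γ ≤ w m} : ℕ) : ℝ) := by exact_mod_cast hle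
    rw [lt_div_iff₀ hγ0]
    have : 1 / (c' - a) < γ := hγ2
    have hca : 0 < c' - a := by linarith
    rw [div_lt_iff₀ hca] at this
    nlinarith
  · -- upper bound
    intro b hb
    set c : ℝ := (-1 / δ + b) / 2 with hcdef
    have hc0 : 0 < c := by simp only [hcdef]; linarith
    have hcL : -1 / δ < c := by simp only [hcdef]; linarith
    have hcb : c < b := by simp only [hcdef]; linarith
    have hkey : 1 < c * (-δ) := by
      have := mul_lt_mul_of_pos_right hcL (show (0:ℝ) < -δ by linarith)
      have h1 : -1 / δ * -δ = 1 := by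
        field_simp
        exact div_self hδ.ne
      linarith [h1 ▸ this]
    have hc₁ : δ < -(1 / c) := by
      rw [lt_neg, div_lt_iff₀ hc0]
      nlinarith
    obtain ⟨N, hN⟩ := (det_key_lt w (-(1 / c)) h hc₁).exists_forall_of_atTop
    filter_upwards [eventually_gt_atTop (0 : ℝ),
      eventually_gt_atTop ((N : ℝ) / b),
      eventually_gt_atTop (1 / (b - c))] with γ hγ0 hγ1 hγ2
    have hγc0 : 0 ≤ γ * c := by positivity
    have hbound : ∀ m ∈ {m : ℕ | 1 ≤ m ∧ -γ ≤ w m}, m ≤ max N ⌈γ * c⌉₊ := by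
      intro m hm
      rcases le_or_gt m N with hmN | hmN
      · exact le_trans hmN (le_max_left _ _)
      · have hw : w m < -(1 / c) * m := hN m hmN.le
        have h2 : -γ ≤ w m := hm.2
        have h3 : (1 / c) * m < γ := by nlinarith
        have hcc : (1 / c) * c = 1 := by field_simp
        have h4 : (m : ℝ) < γ * c := by
          nlinarith [mul_lt_mul_of_pos_right h3 hc0]
        have h5 : (m : ℝ) ≤ (⌈γ * c⌉₊ : ℝ) := le_trans h4.le (Nat.le_ceil _)
        exact le_trans (by exact_mod_cast h5) (le_max_right _ _)
    have hsup : sSup {m : ℕ | 1 ≤ m ∧ -γ ≤ w m} ≤ max N ⌈γ * c⌉₊ :=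
      csSup_le' hbound
    have hceil : (⌈γ * c⌉₊ : ℝ) < γ * c + 1 := Nat.ceil_lt_add_one hγc0
    have hsup' : ((sSup {m : ℕ | 1 ≤ m ∧ -γ ≤ w m} : ℕ) : ℝ) ≤ max (N : ℝ) (γ * c + 1) := by
      have : ((sSup {m : ℕ | 1 ≤ m ∧ -γ ≤ w m} : ℕ) : ℝ) ≤ ((max N ⌈γ * c⌉₊ : ℕ) : ℝ) := by
        exact_mod_cast hsup
      rw [Nat.cast_max] at this
      exact le_trans this (max_le_max le_rfl hceil.le)
    rw [div_lt_iff₀ hγ0]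
    apply lt_of_le_of_lt hsup'
    apply max_lt
    · rw [div_lt_iff₀ (show (0:ℝ) < b by linarith)] at hγ1
      nlinarith
    · rw [div_lt_iff₀ (show (0:ℝ) < b - c by linarith)] at hγ2
      nlinarith

/-- Last exit time of a negative-drift random walk: with `τ(γ) = sup{n ≥ 1 : Wₙ ≥ −γ}`,
`τ(γ)` is finite a.s. (the set of such times is finite) and `τ(γ)/γ → −1/δ` a.s.
as `γ → ∞`, where `δ < 0` is the mean of the increments. -/
theorem last_exit_time_neg_drift
    {Ω : Type*} [MeasurableSpace Ω] (μ : Measure Ω) [IsProbabilityMeasure μ]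
    (X : ℕ → Ω → ℝ) (hmeas : ∀ i, Measurable (X i))
    (hindep : iIndepFun X μ)
    (hident : ∀ i, IdentDistrib (X i) (X 0) μ μ)
    (hint : Integrable (X 0) μ) (δ : ℝ) (hδ : δ < 0) (hmean : ∫ ω, X 0 ω ∂μ = δ)
    (τ : ℝ → Ω → ℕ)
    (hτ : ∀ γ ω, τ γ ω = sSup {n : ℕ | 1 ≤ n ∧ -γ ≤ ∑ i ∈ Finset.range n, X i ω}) :
    ∀ᵐ ω ∂μ,
      (∀ γ : ℝ, 0 < γ → {n : ℕ | 1 ≤ n ∧ -γ ≤ ∑ i ∈ Finset.range n, X i ω}.Finite) ∧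
      Tendsto (fun γ : ℝ => (τ γ ω : ℝ) / γ) atTop (nhds (-1 / δ)) := by
  have hpair : Pairwise (Function.onFun (IndepFun · · μ) X) := fun i j hij => hindep.indepFun hij
  have hs := strong_law_ae_real X hint hpair hident
  rw [show μ[X 0] = δ from hmean] at hs
  filter_upwards [hs] with ω hω
  refine ⟨fun γ _ => det_finite (fun n => ∑ i ∈ Finset.range n, X i ω) hδ hω γ, ?_⟩
  have := det_tendsto (fun n => ∑ i ∈ Finset.range n, X i ω) hδ hω
  simp only [hτ]
  exact this
end

section
/- Let W be a random walk with i.i.d. increments X_i having E[X_i] > 0, and suppose there exists s' > 0 with E[exp(−s' X_i)] = 1. Let T_a = inf{n ≥ 1 : Wₙ ≤ a} for a < 0. Then P(T_a < ∞) ≤ exp(s' a). -/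
open MeasureTheory ProbabilityTheory Filter Set

/-- Exponential bound on the ruin probability of a positive-drift random walk:
if `E[exp(−s' X₁)] = 1` with `s' > 0` and `E[X₁] > 0`, then for `a < 0` the
probability that the walk ever falls to level `a` or below is at most `exp(s' a)`. -/
theorem pos_drift_ruin_probability_bound
    {Ω : Type*} [MeasurableSpace Ω] (μ : Measure Ω) [IsProbabilityMeasure μ]
    (X : ℕ → Ω → ℝ) (hmeas : ∀ i, Measurable (X i))
    (hindep : iIndepFun X μ)
    (hident : ∀ i, IdentDistrib (X i) (X 0) μ μ)
    (hint : Integrable (X 0) μ) (hmean : 0 < ∫ ω, X 0 ω ∂μ)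
    (s' : ℝ) (hs' : 0 < s')
    (hmgf : ∫ ω, Real.exp (-s' * X 0 ω) ∂μ = 1)
    (a : ℝ) (ha : a < 0) :
    (μ {ω | ∃ n, 1 ≤ n ∧ ∑ i ∈ Finset.range n, X i ω ≤ a}).toReal ≤ Real.exp (s' * a) := by
  classical
  set W : ℕ → Ω → ℝ := fun n ω => ∑ i ∈ Finset.range n, X i ω with hWdef
  have hWmeas : ∀ n, Measurable (W n) := fun n => Finset.measurable_sum _ fun i _ => hmeas i
  set f : ℕ → Ω → ENNReal := fun i ω => ENNReal.ofReal (Real.exp (-s' * X i ω)) with hfdef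
  have hfmeas : ∀ i, Measurable (f i) :=
    fun i => (((hmeas i).const_mul (-s')).exp).ennreal_ofReal
  -- lintegral of each f i is 1
  have hint0 : Integrable (fun ω => Real.exp (-s' * X 0 ω)) μ := by
    by_contra h
    rw [integral_undef h] at hmgf
    norm_num at hmgf
  have hL0 : ∫⁻ ω, f 0 ω ∂μ = 1 := by
    rw [hfdef]
    rw [← ofReal_integral_eq_lintegral_ofReal hint0
      (Filter.Eventually.of_forall fun ω => (Real.exp_pos _).le), hmgf, ENNReal.ofReal_one]
  have hL : ∀ i, ∫⁻ ω, f i ω ∂μ = 1 := by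
    intro i
    have hg : Measurable (fun x : ℝ => ENNReal.ofReal (Real.exp (-s' * x))) :=
      ((measurable_const.mul measurable_id).exp).ennreal_ofReal
    calc ∫⁻ ω, f i ω ∂μ = ∫⁻ x, ENNReal.ofReal (Real.exp (-s' * x)) ∂(μ.map (X i)) :=
          (lintegral_map hg (hmeas i)).symm
      _ = ∫⁻ x, ENNReal.ofReal (Real.exp (-s' * x)) ∂(μ.map (X 0)) := by
          rw [(hident i).map_eq]
      _ = ∫⁻ ω, f 0 ω ∂μ := lintegral_map hg (hmeas 0)
      _ = 1 := hL0
  have hfindep : iIndepFun f μ :=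
    hindep.comp (fun _ x => ENNReal.ofReal (Real.exp (-s' * x)))
      (fun _ => ((measurable_const.mul measurable_id).exp).ennreal_ofReal)
  -- lintegral of products over any finset is 1
  have hprod : ∀ s : Finset ℕ, ∫⁻ ω, ∏ i ∈ s, f i ω ∂μ = 1 := by
    intro s
    induction s using Finset.induction_on with
    | empty => simp
    | @insert j s hj ih =>
      have hindJ : IndepFun (∏ i ∈ s, f i) (f j) μ :=
        hfindep.indepFun_finsetProd_of_notMem hfmeas hj
      have hm1 : Measurable (∏ i ∈ s, f i) := by
        rw [show (∏ i ∈ s, f i) = fun ω => ∏ i ∈ s, f i ω from funext fun ω => Finset.prod_apply ..]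
        exact Finset.measurable_prod _ fun i _ => hfmeas i
      calc ∫⁻ ω, ∏ i ∈ insert j s, f i ω ∂μ
          = ∫⁻ ω, ((∏ i ∈ s, f i) * f j) ω ∂μ := by
            congr 1; funext ω
            simp [Finset.prod_insert hj, Finset.prod_apply, mul_comm]
        _ = (∫⁻ ω, (∏ i ∈ s, f i) ω ∂μ) * ∫⁻ ω, f j ω ∂μ :=
            lintegral_mul_eq_lintegral_mul_lintegral_of_indepFun hm1 (hfmeas j) hindJ
        _ = 1 := by
            rw [hL j, mul_one, show (∏ i ∈ s, f i) = fun ω => ∏ i ∈ s, f i ω from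
              funext fun ω => Finset.prod_apply ..]
            exact ih
  -- the first-passage decomposition
  set B : ℕ → Set Ω := fun n => {ω | W n ω ≤ a ∧ ∀ m, 1 ≤ m → m < n → a < W m ω} with hBdef
  have hBmeas : ∀ n, MeasurableSet (B n) := by
    intro n
    have hEq : B n = {ω | W n ω ≤ a} ∩ ⋂ m, ⋂ _ : 1 ≤ m, ⋂ _ : m < n, {ω | a < W m ω} := by
      ext ω; simp [hBdef, Set.mem_iInter]
    rw [hEq]
    exact (measurableSet_le (hWmeas n) measurable_const).inter
      (MeasurableSet.iInter fun m => MeasurableSet.iInter fun _ => MeasurableSet.iInter fun _ =>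
        measurableSet_lt measurable_const (hWmeas m))
  have hB0 : B 0 = ∅ := by
    ext ω
    simp only [hBdef, Set.mem_setOf_eq, Set.mem_empty_iff_false, iff_false, not_and]
    intro h
    have h0 : W 0 ω = 0 := by simp [hWdef]
    exfalso; rw [h0] at h; linarith
  have hBn1 : ∀ n ω, ω ∈ B n → 1 ≤ n := by
    intro n ω h
    rcases Nat.eq_zero_or_pos n with h0 | h1
    · rw [h0, hB0] at h; exact absurd h (Set.notMem_empty ω)
    · exact h1
  have hBdisj : Pairwise (Function.onFun Disjoint B) := by
    intro m n hmn
    wlog hlt : m < n generalizing m n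
    · exact (this hmn.symm (by omega)).symm
    refine Set.disjoint_left.2 fun ω hm hn => ?_
    exact absurd hm.1 (not_le.2 (hn.2 m (hBn1 m ω hm) hlt))
  have hAeq : {ω | ∃ n, 1 ≤ n ∧ ∑ i ∈ Finset.range n, X i ω ≤ a} = ⋃ n, B (n + 1) := by
    ext ω
    simp only [Set.mem_setOf_eq, Set.mem_iUnion]
    constructor
    · intro h
      have hex : ∃ n, 1 ≤ n ∧ W n ω ≤ a := h
      have hn₀ := Nat.find_spec hex
      refine ⟨Nat.find hex - 1, ?_⟩
      have h1 : 1 ≤ Nat.find hex := hn₀.1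
      have hsub : Nat.find hex - 1 + 1 = Nat.find hex := by omega
      rw [hsub]
      refine ⟨hn₀.2, fun m h1m hmn => ?_⟩
      have hmin := Nat.find_min hex (m := m) (by omega)
      push_neg at hmin
      exact hmin h1m
    · rintro ⟨n, hn⟩
      exact ⟨n + 1, by omega, hn.1⟩
  -- splicing step via independence
  have hstep : ∀ n N : ℕ, n ≤ N → ∫⁻ ω in B n, ∏ i ∈ Finset.range N, f i ω ∂μ
      = ∫⁻ ω in B n, ∏ i ∈ Finset.range n, f i ω ∂μ := by
    intro n N hnN
    set U : Ω → ENNReal := (B n).indicator (fun ω => ∏ i ∈ Finset.range n, f i ω) with hUdef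
    set V : Ω → ENNReal := fun ω => ∏ i ∈ Finset.Ico n N, f i ω with hVdef
    have hUmeas : Measurable U :=
      (Finset.measurable_prod _ fun i _ => hfmeas i).indicator (hBmeas n)
    have hVmeas : Measurable V := Finset.measurable_prod _ fun i _ => hfmeas i
    have hSt : ∀ m : ℕ, m ≤ n → ∀ ω : Ω,
        (∑ i ∈ (Finset.range n).attach.filter
          (fun (i : {x // x ∈ Finset.range n}) => i.1 < m), X i.1 ω) = W m ω := by
      intro m hm ω
      calc (∑ i ∈ (Finset.range n).attach.filter
            (fun (i : {x // x ∈ Finset.range n}) => i.1 < m), X i.1 ω)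
          = ∑ i ∈ (Finset.range n).attach, if i.1 < m then X i.1 ω else 0 :=
            Finset.sum_filter _ _
        _ = ∑ i ∈ Finset.range n, if i < m then X i ω else 0 :=
            Finset.sum_attach (Finset.range n) (fun i => if i < m then X i ω else 0)
        _ = W m ω := by
            rw [← Finset.sum_filter]
            show _ = ∑ i ∈ Finset.range m, X i ω
            congr 1
            ext i
            simp only [Finset.mem_filter, Finset.mem_range]
            omega
    have hdisjST : Disjoint (Finset.range n) (Finset.Ico n N) := by
      refine Finset.disjoint_left.2 fun i hi hj => ?_
      simp only [Finset.mem_range] at hi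
      simp only [Finset.mem_Ico] at hj
      omega
    have hXind := hindep.indepFun_finset (Finset.range n) (Finset.Ico n N) hdisjST hmeas
    obtain ⟨C, hCdef⟩ : ∃ C : Set (({x // x ∈ Finset.range n}) → ℝ),
        C = {v | (∑ i ∈ (Finset.range n).attach.filter
              (fun (i : {x // x ∈ Finset.range n}) => i.1 < n), v i) ≤ a ∧
          ∀ m, 1 ≤ m → m < n →
            a < ∑ i ∈ (Finset.range n).attach.filter
              (fun (i : {x // x ∈ Finset.range n}) => i.1 < m), v i} := ⟨_, rfl⟩
    have hCmeas : MeasurableSet C := by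
      have hEq : C = {v | (∑ i ∈ (Finset.range n).attach.filter
              (fun (i : {x // x ∈ Finset.range n}) => i.1 < n), v i) ≤ a}
          ∩ ⋂ m, ⋂ _ : 1 ≤ m, ⋂ _ : m < n,
            {v | a < ∑ i ∈ (Finset.range n).attach.filter
              (fun (i : {x // x ∈ Finset.range n}) => i.1 < m), v i} := by
        ext v; simp [hCdef, Set.mem_iInter]
      rw [hEq]
      exact (measurableSet_le (Finset.measurable_sum _ fun i _ => measurable_pi_apply i)
          measurable_const).inter
        (MeasurableSet.iInter fun m => MeasurableSet.iInter fun _ => MeasurableSet.iInter fun _ =>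
          measurableSet_lt measurable_const (Finset.measurable_sum _ fun i _ =>
            measurable_pi_apply i))
    obtain ⟨φ, hφdef⟩ : ∃ φ : (({x // x ∈ Finset.range n}) → ℝ) → ENNReal,
        φ = C.indicator (fun v => ∏ i ∈ (Finset.range n).attach,
          ENNReal.ofReal (Real.exp (-s' * v i))) := ⟨_, rfl⟩
    obtain ⟨ψ, hψdef⟩ : ∃ ψ : (({x // x ∈ Finset.Ico n N}) → ℝ) → ENNReal,
        ψ = fun v => ∏ i ∈ (Finset.Ico n N).attach,
          ENNReal.ofReal (Real.exp (-s' * v i)) := ⟨_, rfl⟩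
    have hφmeas : Measurable φ := by
      rw [hφdef]
      exact (Finset.measurable_prod _ fun i _ =>
        (((measurable_pi_apply i : Measurable fun v : ↥(Finset.range n) → ℝ => v i).const_mul
          (-s')).exp).ennreal_ofReal).indicator hCmeas
    have hψmeas : Measurable ψ := by
      rw [hψdef]
      exact Finset.measurable_prod _ fun i _ =>
        (((measurable_pi_apply i : Measurable fun v : ↥(Finset.Ico n N) → ℝ => v i).const_mul
          (-s')).exp).ennreal_ofReal
    have hmem : ∀ ω, ω ∈ B n ↔ (fun i : ↥(Finset.range n) => X i ω) ∈ C := by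
      intro ω
      simp only [hBdef, hCdef, Set.mem_setOf_eq]
      constructor
      · rintro ⟨h1, h2⟩
        refine ⟨by rw [hSt n le_rfl ω]; exact h1, fun m h1m hmn => ?_⟩
        rw [hSt m hmn.le ω]; exact h2 m h1m hmn
      · rintro ⟨h1, h2⟩
        rw [hSt n le_rfl ω] at h1
        refine ⟨h1, fun m h1m hmn => ?_⟩
        have := h2 m h1m hmn; rwa [hSt m hmn.le ω] at this
    have hUeq : U = φ ∘ (fun ω (i : ↥(Finset.range n)) => X i ω) := by
      funext ω
      have hprodeq : ∏ i ∈ (Finset.range n).attach,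
          ENNReal.ofReal (Real.exp (-s' * X i ω)) = ∏ i ∈ Finset.range n, f i ω := by
        simp only [hfdef]
        exact Finset.prod_attach (Finset.range n)
          (fun i => ENNReal.ofReal (Real.exp (-s' * X i ω)))
      by_cases hω : ω ∈ B n
      · rw [hUdef, hφdef]
        simp only [Function.comp_apply, Set.indicator_of_mem hω,
          Set.indicator_of_mem ((hmem ω).1 hω)]
        exact hprodeq.symm
      · rw [hUdef, hφdef]
        simp only [Function.comp_apply, Set.indicator_of_notMem hω,
          Set.indicator_of_notMem (fun hc => hω ((hmem ω).2 hc))]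
    have hVeq : V = ψ ∘ (fun ω (i : ↥(Finset.Ico n N)) => X i ω) := by
      funext ω
      rw [hVdef, hψdef]
      simp only [Function.comp_apply]
      exact (Finset.prod_attach _ _).symm
    have hUV : IndepFun U V μ := by
      rw [hUeq, hVeq]
      exact hXind.comp hφmeas hψmeas
    have hVL : ∫⁻ ω, V ω ∂μ = 1 := hprod _
    calc ∫⁻ ω in B n, ∏ i ∈ Finset.range N, f i ω ∂μ
        = ∫⁻ ω, (B n).indicator (fun ω => ∏ i ∈ Finset.range N, f i ω) ω ∂μ := by
          rw [lintegral_indicator (hBmeas n)]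
      _ = ∫⁻ ω, U ω * V ω ∂μ := by
          congr 1; funext ω
          by_cases hω : ω ∈ B n
          · rw [Set.indicator_of_mem hω, hUdef, hVdef]
            simp only [Set.indicator_of_mem hω]
            exact (Finset.prod_range_mul_prod_Ico (fun i => f i ω) hnN).symm
          · rw [Set.indicator_of_notMem hω, hUdef]
            simp [Set.indicator_of_notMem hω]
      _ = (∫⁻ ω, U ω ∂μ) * ∫⁻ ω, V ω ∂μ :=
          lintegral_mul_eq_lintegral_mul_lintegral_of_indepFun''
            hUmeas.aemeasurable hVmeas.aemeasurable hUV
      _ = ∫⁻ ω in B n, ∏ i ∈ Finset.range n, f i ω ∂μ := by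
          rw [hVL, mul_one, hUdef, lintegral_indicator (hBmeas n)]
  -- lower bound of the integrand on B n
  have hlow : ∀ n, ENNReal.ofReal (Real.exp (-s' * a)) * μ (B n)
      ≤ ∫⁻ ω in B n, ∏ i ∈ Finset.range n, f i ω ∂μ := by
    intro n
    have hpt : ∀ ω ∈ B n,
        ENNReal.ofReal (Real.exp (-s' * a)) ≤ ∏ i ∈ Finset.range n, f i ω := by
      intro ω hω
      have h1 : ∏ i ∈ Finset.range n, f i ω
          = ENNReal.ofReal (Real.exp (-s' * W n ω)) := by
        simp only [hfdef]
        rw [← ENNReal.ofReal_prod_of_nonneg (fun i _ => (Real.exp_pos _).le), ← Real.exp_sum]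
        congr 1
        rw [hWdef]
        simp [Finset.mul_sum]
      rw [h1]
      have hWa : W n ω ≤ a := hω.1
      exact ENNReal.ofReal_le_ofReal (Real.exp_le_exp.2 (by nlinarith))
    calc ENNReal.ofReal (Real.exp (-s' * a)) * μ (B n)
        = ∫⁻ _ω in B n, ENNReal.ofReal (Real.exp (-s' * a)) ∂μ := by
          rw [MeasureTheory.setLIntegral_const]
      _ ≤ ∫⁻ ω in B n, ∏ i ∈ Finset.range n, f i ω ∂μ :=
          setLIntegral_mono (Finset.measurable_prod _ fun i _ => hfmeas i) hpt
  -- partial-sum bound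
  have hsumN : ∀ N : ℕ, ∑ k ∈ Finset.range N, μ (B (k + 1))
      ≤ ENNReal.ofReal (Real.exp (s' * a)) := by
    intro N
    have hmain : ENNReal.ofReal (Real.exp (-s' * a)) * ∑ k ∈ Finset.range N, μ (B (k + 1)) ≤ 1 := by
      rw [Finset.mul_sum]
      calc ∑ k ∈ Finset.range N, ENNReal.ofReal (Real.exp (-s' * a)) * μ (B (k + 1))
          ≤ ∑ k ∈ Finset.range N, ∫⁻ ω in B (k + 1), ∏ i ∈ Finset.range N, f i ω ∂μ := by
            refine Finset.sum_le_sum fun k hk => ?_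
            refine (hlow (k + 1)).trans (le_of_eq ?_)
            exact (hstep (k + 1) N (Finset.mem_range.1 hk)).symm
        _ = ∫⁻ ω in ⋃ k ∈ Finset.range N, B (k + 1), ∏ i ∈ Finset.range N, f i ω ∂μ := by
            rw [lintegral_biUnion_finset (t := fun k => B (k + 1)) (s := Finset.range N)
              (fun x _ y _ hxy => hBdisj (show x + 1 ≠ y + 1 by omega))
              (fun k _ => hBmeas (k + 1))]
        _ ≤ ∫⁻ ω, ∏ i ∈ Finset.range N, f i ω ∂μ := setLIntegral_le_lintegral _ _
        _ = 1 := hprod _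
    have hconv : ENNReal.ofReal (Real.exp (s' * a)) * ENNReal.ofReal (Real.exp (-s' * a)) = 1 := by
      rw [← ENNReal.ofReal_mul (Real.exp_pos _).le, ← Real.exp_add]
      have : s' * a + -s' * a = 0 := by ring
      rw [this, Real.exp_zero, ENNReal.ofReal_one]
    calc ∑ k ∈ Finset.range N, μ (B (k + 1))
        = ENNReal.ofReal (Real.exp (s' * a)) *
            (ENNReal.ofReal (Real.exp (-s' * a)) * ∑ k ∈ Finset.range N, μ (B (k + 1))) := by
          rw [← mul_assoc, hconv, one_mul]
      _ ≤ ENNReal.ofReal (Real.exp (s' * a)) * 1 := mul_le_mul_right hmain _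
      _ = ENNReal.ofReal (Real.exp (s' * a)) := mul_one _
  have hA : μ {ω | ∃ n, 1 ≤ n ∧ ∑ i ∈ Finset.range n, X i ω ≤ a}
      ≤ ENNReal.ofReal (Real.exp (s' * a)) := by
    rw [hAeq, measure_iUnion (f := fun k => B (k + 1))
      (fun i j hij => hBdisj (show i + 1 ≠ j + 1 by omega))
      (fun k => hBmeas (k + 1))]
    rw [ENNReal.tsum_eq_iSup_sum]
    refine iSup_le fun s => ?_
    refine le_trans (Finset.sum_le_sum_of_subset fun k hk =>
      Finset.mem_range.2 (Nat.lt_succ_of_le (Finset.le_sup (f := id) hk))) (hsumN (s.sup id + 1))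
  exact ENNReal.toReal_le_of_le_ofReal (Real.exp_pos _).le hA
end

section
/- Let S be a random walk with i.i.d. increments with positive mean, and suppose the moment generating function of the increments is finite in a neighborhood of 0 and the increments have an exponentially decaying right tail. Let τ(c) be a random time with P(τ(c) > t) ≤ k₁ e^{−ηt} for all t, with η > 0. Then there exist constants k₂ > 0 and s(η) > 0 (given by s(η) = η/Λ⁻¹(η) for the Legendre transform Λ of the cumulant generating function, when η < Λ(ess sup of increments)) such that P(S_{τ(c)} > |log c|) ≤ k₂ exp(−s(η)|log c|) = k₂ c^{s(η)}. -/
open MeasureTheory ProbabilityTheory Filter Set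

/-- Tail bound for a positive-drift random walk evaluated at an exponentially-tailed
random time: if the i.i.d. increments have positive mean, MGF finite near `0` and an
exponentially decaying right tail, and `P(τ(c) > t) ≤ k₁ e^{−ηt}` with `η > 0`, then
there are constants `k₂ > 0`, `s > 0` with
`P(S_{τ(c)} > |log c|) ≤ k₂ exp(−s |log c|) = k₂ c^s` for all `c ∈ (0,1)`. -/
theorem random_time_walk_tail_bound
    {Ω : Type*} [MeasurableSpace Ω] (μ : Measure Ω) [IsProbabilityMeasure μ]
    (X : ℕ → Ω → ℝ) (hmeas : ∀ i, Measurable (X i))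
    (hindep : iIndepFun X μ)
    (hident : ∀ i, IdentDistrib (X i) (X 0) μ μ)
    (hint : Integrable (X 0) μ) (hmean : 0 < ∫ ω, X 0 ω ∂μ)
    (hmgf : ∃ ε > 0, ∀ t : ℝ, |t| < ε → Integrable (fun ω => Real.exp (t * X 0 ω)) μ)
    (htail : ∃ C > 0, ∃ b > 0, ∀ x : ℝ, 0 < x →
        (μ {ω | x < X 0 ω}).toReal ≤ C * Real.exp (-b * x))
    (τ : ℝ → Ω → ℕ) (η k₁ : ℝ) (hη : 0 < η)
    (hτ : ∀ c ∈ Set.Ioo (0:ℝ) 1, ∀ t : ℝ, 0 ≤ t →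
        (μ {ω | t < (τ c ω : ℝ)}).toReal ≤ k₁ * Real.exp (-η * t)) :
    ∃ k₂ > 0, ∃ s > 0, ∀ c ∈ Set.Ioo (0:ℝ) 1,
      (μ {ω | |Real.log c| < ∑ k ∈ Finset.range (τ c ω), X k ω}).toReal
        ≤ k₂ * Real.exp (-s * |Real.log c|) := by
  clear hint hmean htail
  obtain ⟨ε, hε, hintmgf⟩ := hmgf
  set t := ε / 2 with ht_def
  have ht : 0 < t := by positivity
  have hMint : Integrable (fun ω => Real.exp (t * X 0 ω)) μ :=
    hintmgf t (by rw [abs_of_pos ht]; simp only [ht_def]; linarith)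
  set M := mgf (X 0) μ t with hM_def
  have hMpos : 0 < M := mgf_pos hMint
  set a := max (Real.log M) 1 with ha_def
  have ha1 : (1:ℝ) ≤ a := le_max_right _ _
  have ha0 : (0:ℝ) < a := lt_of_lt_of_le one_pos ha1
  set α := t / (2 * a) with hα_def
  have hα : 0 < α := by positivity
  have hαa : α * a = t / 2 := by rw [hα_def]; field_simp
  set s := min (η * α) (t / 4) with hs_def
  have hs : 0 < s := lt_min (by positivity) (by positivity)
  set K := (4 * α / t + 2) * Real.exp a with hK_def
  have hK : 0 < K := by positivity
  have hk₁ : (0:ℝ) ≤ max k₁ 0 := le_max_right _ _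
  refine ⟨max k₁ 0 + K, by linarith, s, hs, ?_⟩
  intro c hc
  set L := |Real.log c| with hL_def
  have hL : 0 < L := abs_pos.mpr (ne_of_lt (Real.log_neg hc.1 hc.2))
  set N := ⌈α * L⌉₊ with hN_def
  -- identical distribution facts
  have hid_exp : ∀ i : ℕ, IdentDistrib (fun ω => Real.exp (t * X i ω))
      (fun ω => Real.exp (t * X 0 ω)) μ μ := fun i =>
    (hident i).comp (Real.measurable_exp.comp (measurable_const_mul t))
  have hint_i : ∀ i : ℕ, Integrable (fun ω => Real.exp (t * X i ω)) μ := fun i =>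
    ((hid_exp i).integrable_iff).mpr hMint
  have hmgf_i : ∀ i : ℕ, mgf (X i) μ t = M := fun i => (hid_exp i).integral_eq
  -- Chernoff bound for each fixed n
  have chern : ∀ n : ℕ, (μ {ω | L ≤ (∑ k ∈ Finset.range n, X k) ω}).toReal
      ≤ Real.exp (-t * L) * M ^ n := by
    intro n
    have hint_sum : Integrable (fun ω => Real.exp (t * (∑ k ∈ Finset.range n, X k) ω)) μ :=
      hindep.integrable_exp_mul_sum hmeas (fun i _ => hint_i i)
    have h1 := measure_ge_le_exp_mul_mgf (μ := μ) (X := ∑ k ∈ Finset.range n, X k) L ht.le hint_sum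
    have h2 : mgf (∑ k ∈ Finset.range n, X k) μ t = M ^ n := by
      rw [hindep.mgf_sum hmeas, Finset.prod_congr rfl (fun i _ => hmgf_i i),
        Finset.prod_const, Finset.card_range]
    rwa [h2] at h1
  -- inclusion of events
  have hincl : {ω | L < ∑ k ∈ Finset.range (τ c ω), X k ω} ⊆
      {ω | α * L < (τ c ω : ℝ)} ∪
        ⋃ n ∈ Finset.range (N + 1), {ω | L ≤ (∑ k ∈ Finset.range n, X k) ω} := by
    intro ω hω
    by_cases h : α * L < (τ c ω : ℝ)
    · exact Or.inl h
    · have hτN : τ c ω ∈ Finset.range (N + 1) := by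
        rw [Finset.mem_range]
        refine Nat.lt_succ_of_le (Nat.cast_le (α := ℝ) |>.mp ?_)
        exact (not_lt.mp h).trans (Nat.le_ceil _)
      exact Or.inr (Set.mem_iUnion₂.mpr ⟨τ c ω, hτN,
        by simpa [Finset.sum_apply] using le_of_lt hω⟩)
  -- measure bound in ℝ≥0∞ then toReal
  have h1 : μ {ω | L < ∑ k ∈ Finset.range (τ c ω), X k ω}
      ≤ μ {ω | α * L < (τ c ω : ℝ)} +
        ∑ n ∈ Finset.range (N + 1), μ {ω | L ≤ (∑ k ∈ Finset.range n, X k) ω} := by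
    refine (measure_mono hincl).trans ((measure_union_le _ _).trans ?_)
    gcongr
    exact measure_biUnion_finset_le _ _
  have hfin : μ {ω | α * L < (τ c ω : ℝ)} +
      ∑ n ∈ Finset.range (N + 1), μ {ω | L ≤ (∑ k ∈ Finset.range n, X k) ω} ≠ ⊤ :=
    ENNReal.add_ne_top.mpr ⟨measure_ne_top _ _,
      (ENNReal.sum_lt_top.mpr fun n _ => measure_lt_top _ _).ne⟩
  have h2 : (μ {ω | L < ∑ k ∈ Finset.range (τ c ω), X k ω}).toReal
      ≤ (μ {ω | α * L < (τ c ω : ℝ)}).toReal +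
        ∑ n ∈ Finset.range (N + 1), (μ {ω | L ≤ (∑ k ∈ Finset.range n, X k) ω}).toReal := by
    have := ENNReal.toReal_mono hfin h1
    rwa [ENNReal.toReal_add (measure_ne_top _ _)
        (ENNReal.sum_lt_top.mpr fun n _ => measure_lt_top _ _).ne,
      ENNReal.toReal_sum (fun n _ => measure_ne_top _ _)] at this
  -- bound the first term
  have hB : (μ {ω | α * L < (τ c ω : ℝ)}).toReal ≤ max k₁ 0 * Real.exp (-s * L) := by
    refine (hτ c hc (α * L) (by positivity)).trans ?_
    have he : Real.exp (-η * (α * L)) ≤ Real.exp (-s * L) := by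
      apply Real.exp_le_exp.mpr
      have h' : s * L ≤ η * α * L := mul_le_mul_of_nonneg_right (min_le_left _ _) hL.le
      have h'' : η * (α * L) = η * α * L := by ring
      linarith
    calc k₁ * Real.exp (-η * (α * L)) ≤ max k₁ 0 * Real.exp (-η * (α * L)) :=
          mul_le_mul_of_nonneg_right (le_max_left _ _) (Real.exp_pos _).le
      _ ≤ max k₁ 0 * Real.exp (-s * L) := mul_le_mul_of_nonneg_left he hk₁
  -- bound the sum
  have hNle : (N : ℝ) ≤ α * L + 1 := (Nat.ceil_lt_add_one (by positivity)).le
  have hMn : ∀ n ∈ Finset.range (N + 1), M ^ n ≤ Real.exp (t / 2 * L + a) := by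
    intro n hn
    have hn' : (n : ℝ) ≤ (N : ℝ) := by
      exact_mod_cast Nat.lt_succ_iff.mp (Finset.mem_range.mp hn)
    have hnn : (0:ℝ) ≤ (n : ℝ) := Nat.cast_nonneg n
    have hMe : M ^ n = Real.exp ((n : ℝ) * Real.log M) := by
      rw [Real.exp_nat_mul, Real.exp_log hMpos]
    rw [hMe]
    apply Real.exp_le_exp.mpr
    have hlogM : Real.log M ≤ a := le_max_left _ _
    have e1 : (n : ℝ) * Real.log M ≤ (n : ℝ) * a := mul_le_mul_of_nonneg_left hlogM hnn
    have e2 : (n : ℝ) * a ≤ (N : ℝ) * a := mul_le_mul_of_nonneg_right hn' ha0.le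
    have e3 : (N : ℝ) * a ≤ (α * L + 1) * a := mul_le_mul_of_nonneg_right hNle ha0.le
    have e4 : (α * L + 1) * a = t / 2 * L + a := by rw [← hαa]; ring
    linarith
  have hSum : ∑ n ∈ Finset.range (N + 1), (μ {ω | L ≤ (∑ k ∈ Finset.range n, X k) ω}).toReal
      ≤ K * Real.exp (-s * L) := by
    have hterm : ∀ n ∈ Finset.range (N + 1),
        (μ {ω | L ≤ (∑ k ∈ Finset.range n, X k) ω}).toReal
          ≤ Real.exp a * Real.exp (-(t / 2) * L) := by
      intro n hn
      refine (chern n).trans ?_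
      calc Real.exp (-t * L) * M ^ n ≤ Real.exp (-t * L) * Real.exp (t / 2 * L + a) :=
            mul_le_mul_of_nonneg_left (hMn n hn) (Real.exp_pos _).le
        _ = Real.exp a * Real.exp (-(t / 2) * L) := by
            rw [← Real.exp_add, ← Real.exp_add]; congr 1; ring
    refine (Finset.sum_le_sum hterm).trans ?_
    rw [Finset.sum_const, Finset.card_range, nsmul_eq_mul]
    have hcard : ((N + 1 : ℕ) : ℝ) ≤ α * L + 2 := by push_cast; linarith
    have hL4 : L ≤ 4 / t * Real.exp (t / 4 * L) := by
      have h4 : t / 4 * L ≤ Real.exp (t / 4 * L) := by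
        have := Real.add_one_le_exp (t / 4 * L); linarith
      calc L = 4 / t * (t / 4 * L) := by field_simp
        _ ≤ 4 / t * Real.exp (t / 4 * L) := mul_le_mul_of_nonneg_left h4 (by positivity)
    have hone : (1:ℝ) ≤ Real.exp (t / 4 * L) := Real.one_le_exp (by positivity)
    have hcard2 : ((N + 1 : ℕ) : ℝ) ≤ (4 * α / t + 2) * Real.exp (t / 4 * L) := by
      have hαL : α * L ≤ 4 * α / t * Real.exp (t / 4 * L) := by
        calc α * L ≤ α * (4 / t * Real.exp (t / 4 * L)) :=
              mul_le_mul_of_nonneg_left hL4 hα.le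
          _ = 4 * α / t * Real.exp (t / 4 * L) := by ring
      have hsplit : (4 * α / t + 2) * Real.exp (t / 4 * L)
          = 4 * α / t * Real.exp (t / 4 * L) + 2 * Real.exp (t / 4 * L) := by ring
      linarith
    have hexp : Real.exp (t / 4 * L) * Real.exp (-(t / 2) * L) ≤ Real.exp (-s * L) := by
      rw [← Real.exp_add]
      apply Real.exp_le_exp.mpr
      have h' : s * L ≤ t / 4 * L := mul_le_mul_of_nonneg_right (min_le_right _ _) hL.le
      have h'' : t / 2 * L = 2 * (t / 4 * L) := by ring
      have h''' : -(t / 2) * L = -(t / 2 * L) := by ring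
      linarith
    calc ((N + 1 : ℕ) : ℝ) * (Real.exp a * Real.exp (-(t / 2) * L))
        ≤ ((4 * α / t + 2) * Real.exp (t / 4 * L)) * (Real.exp a * Real.exp (-(t / 2) * L)) := by
          apply mul_le_mul_of_nonneg_right hcard2 (by positivity)
      _ = K * (Real.exp (t / 4 * L) * Real.exp (-(t / 2) * L)) := by rw [hK_def]; ring
      _ ≤ K * Real.exp (-s * L) := mul_le_mul_of_nonneg_left hexp hK.le
  calc (μ {ω | L < ∑ k ∈ Finset.range (τ c ω), X k ω}).toReal
      ≤ (μ {ω | α * L < (τ c ω : ℝ)}).toReal +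
        ∑ n ∈ Finset.range (N + 1), (μ {ω | L ≤ (∑ k ∈ Finset.range n, X k) ω}).toReal := h2
    _ ≤ max k₁ 0 * Real.exp (-s * L) + K * Real.exp (-s * L) := add_le_add hB hSum
    _ = (max k₁ 0 + K) * Real.exp (-s * L) := by ring
end
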